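/- Let $d \geq 2$, let $\nu = (p_1/q, \ldots, p_d/q)^T$ with positive integers $p_i < q$ and $\gcd(p_1,\ldots,p_d,q)=1$, and let $L_\nu = \mathbb{Z}^d + \mathbb{Z}\nu$. Define $N(x) = \|(x_1, \ldots, x_{d-1}, 1 - x_d)\|$. Then there exists an integer $t$ with $1 \leq t \leq q-1$ such that $\xi = t\nu \bmod 1$ satisfies $N(\xi) \leq (1 + \sqrt{d}) \tau(L_\nu)$; moreover if $\tau(L_\nu) < 1/2$ then $t$ can be chosen with $\{t p_d/q\} > 0$. -/

import Mathlib

/-- The set `L_ν = ℤ^d + ℤν`. -/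
def latticeNu (d : ℕ) (ν : EuclideanSpace ℝ (Fin d)) : Set (EuclideanSpace ℝ (Fin d)) :=
  {x | ∃ (z : Fin d → ℤ) (t : ℤ), ∀ i, x i = (z i : ℝ) + (t : ℝ) * ν i}

/-- The covering radius of a subset `L ⊆ ℝ^d` (Euclidean norm). -/
noncomputable def covRad (d : ℕ) (L : Set (EuclideanSpace ℝ (Fin d))) : ℝ :=
  sInf {σ : ℝ | 0 < σ ∧ ∀ x : EuclideanSpace ℝ (Fin d), ∃ y ∈ L, dist x y ≤ σ}

/-- `N(x) = ‖(x_1,…,x_{d-1}, 1 - x_d)‖`. -/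
noncomputable def NFn (d : ℕ) (hd : 0 < d) (x : EuclideanSpace ℝ (Fin d)) : ℝ :=
  Real.sqrt ((∑ i ∈ Finset.univ.filter (fun i : Fin d => (i : ℕ) < d - 1), (x i) ^ 2) +
    (1 - x ⟨d - 1, Nat.sub_lt hd one_pos⟩) ^ 2)

lemma aux_fract_le (u : ℝ) : Int.fract u ≤ 1/2 + |u - 1/2| := by
  rcases le_or_gt 0 u with h0 | h0
  · rcases lt_or_ge u 1 with h1 | h1
    · rw [Int.fract_eq_self.mpr ⟨h0, h1⟩]
      rcases abs_cases (u - 1/2) with ⟨h, _⟩ | ⟨h, _⟩ <;> linarith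
    · have h2 : (1:ℝ) ≤ 1/2 + |u - 1/2| := by
        rcases abs_cases (u - 1/2) with ⟨h, _⟩ | ⟨h, _⟩ <;> linarith
      linarith [Int.fract_lt_one u]
  · have h2 : (1:ℝ) ≤ 1/2 + |u - 1/2| := by
      rcases abs_cases (u - 1/2) with ⟨h, _⟩ | ⟨h, _⟩ <;> linarith
    linarith [Int.fract_lt_one u]

lemma aux_one_sub_fract_le (u : ℝ) : 1 - Int.fract u ≤ 1/2 + |u - 1/2| := by
  rcases le_or_gt 0 u with h0 | h0
  · rcases lt_or_ge u 1 with h1 | h1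
    · rw [Int.fract_eq_self.mpr ⟨h0, h1⟩]
      rcases abs_cases (u - 1/2) with ⟨h, _⟩ | ⟨h, _⟩ <;> linarith
    · have h2 : (1:ℝ) ≤ 1/2 + |u - 1/2| := by
        rcases abs_cases (u - 1/2) with ⟨h, _⟩ | ⟨h, _⟩ <;> linarith
      linarith [Int.fract_nonneg u]
  · have h2 : (1:ℝ) ≤ 1/2 + |u - 1/2| := by
      rcases abs_cases (u - 1/2) with ⟨h, _⟩ | ⟨h, _⟩ <;> linarith
    linarith [Int.fract_nonneg u]

lemma aux_filter_not {d : ℕ} (hd : 2 ≤ d) :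
    Finset.univ.filter (fun i : Fin d => ¬ (i:ℕ) < d - 1) = {(⟨d-1, by omega⟩ : Fin d)} := by
  ext i
  simp only [Finset.mem_filter, Finset.mem_univ, true_and, Finset.mem_singleton, not_lt]
  constructor
  · intro h; have h2 := i.isLt; apply Fin.ext; simp only [Fin.val_mk]; omega
  · intro h; subst h; simp only [Fin.val_mk]; omega

lemma aux_sum_split {d : ℕ} (hd : 2 ≤ d) (f : Fin d → ℝ) :
    ∑ i, f i = (∑ i ∈ Finset.univ.filter (fun i : Fin d => (i:ℕ) < d - 1), f i)
      + f ⟨d-1, by omega⟩ := by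
  classical
  rw [← Finset.sum_filter_add_sum_filter_not Finset.univ (fun i : Fin d => (i:ℕ) < d - 1) f]
  congr 1
  rw [aux_filter_not hd, Finset.sum_singleton]

lemma aux_card {d : ℕ} (hd : 2 ≤ d) :
    (Finset.univ.filter (fun i : Fin d => (i:ℕ) < d - 1)).card = d - 1 := by
  classical
  have h := Finset.card_filter_add_card_filter_not
    (s := (Finset.univ : Finset (Fin d))) (p := fun i : Fin d => (i:ℕ) < d - 1)
  rw [aux_filter_not hd] at h
  simp at h
  omega

lemma aux_dist {d : ℕ} (x y : EuclideanSpace ℝ (Fin d)) :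
    dist x y = Real.sqrt (∑ i, (x i - y i)^2) := by
  rw [EuclideanSpace.dist_eq]
  congr 1
  refine Finset.sum_congr rfl fun i _ => ?_
  rw [Real.dist_eq, sq_abs]

lemma aux_coord {d : ℕ} (x y : EuclideanSpace ℝ (Fin d)) (i : Fin d) :
    |x i - y i| ≤ dist x y := by
  rw [aux_dist, ← Real.sqrt_sq (abs_nonneg (x i - y i)), sq_abs]
  exact Real.sqrt_le_sqrt (Finset.single_le_sum (f := fun j => (x j - y j)^2)
    (fun j _ => sq_nonneg _) (Finset.mem_univ i))

lemma aux_fract_shift (q : ℕ) (hq : 0 < q) (pp : ℕ) (t : ℤ) :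
    Int.fract ((((t % (q:ℤ)).toNat : ℕ) : ℝ) * ((pp:ℝ) / q)) = Int.fract ((t:ℝ) * ((pp:ℝ)/q)) := by
  have hq0 : (q:ℝ) ≠ 0 := by positivity
  have h0 : (0:ℤ) ≤ t % (q:ℤ) := Int.emod_nonneg t (by exact_mod_cast hq.ne')
  have h1 : (((t % (q:ℤ)).toNat : ℕ) : ℝ) = ((t % (q:ℤ) : ℤ) : ℝ) := by
    exact_mod_cast congrArg (Int.cast : ℤ → ℝ) (Int.toNat_of_nonneg h0)
  rw [h1]
  have htR : ((q:ℝ)) * ((t/(q:ℤ) : ℤ):ℝ) + ((t%(q:ℤ) : ℤ):ℝ) = (t:ℝ) := by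
    exact_mod_cast congrArg (Int.cast : ℤ → ℝ) (Int.mul_ediv_add_emod t (q:ℤ))
  have h2 : (t : ℝ) * ((pp:ℝ)/q) = ((t / (q:ℤ) * pp : ℤ) : ℝ) + ((t % (q:ℤ) : ℤ) : ℝ) * ((pp:ℝ)/q) := by
    field_simp
    push_cast
    linear_combination (-(pp:ℝ)) * htR
  rw [h2, Int.fract_intCast_add]

lemma aux_NFn_le {d : ℕ} (hd : 2 ≤ d) (ξ g : Fin d → ℝ)
    (h1 : ∀ i : Fin d, (i:ℕ) < d - 1 → (ξ i)^2 ≤ (g i)^2)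
    (h2 : (1 - ξ ⟨d-1, by omega⟩)^2 ≤ (g ⟨d-1, by omega⟩)^2) :
    NFn d (by omega) (WithLp.toLp 2 ξ) ≤ Real.sqrt (∑ i, (g i)^2) := by
  unfold NFn
  apply Real.sqrt_le_sqrt
  rw [aux_sum_split hd (fun i => (g i)^2)]
  exact add_le_add
    (Finset.sum_le_sum (fun i hi => h1 i (Finset.mem_filter.mp hi).2)) h2


set_option maxHeartbeats 2000000

/-- Proposition 2: some iterate `ξ = tν mod 1` has `N(ξ) ≤ (1+√d)·τ(L_ν)`, and if
`τ(L_ν) < 1/2` it can be chosen with positive rounding effect. -/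
theorem exists_iterate_NFn (d : ℕ) (hd : 2 ≤ d) (p : Fin d → ℕ) (q : ℕ)
    (hp : ∀ i, 0 < p i) (hq : ∀ i, p i < q)
    (hgcd : Nat.gcd (Finset.univ.gcd p) q = 1)
    (ν : EuclideanSpace ℝ (Fin d)) (hν : ∀ i, ν i = (p i : ℝ) / (q : ℝ)) :
    (∃ t : ℕ, 1 ≤ t ∧ t ≤ q - 1 ∧
       NFn d (by omega) (WithLp.toLp 2 (fun i => Int.fract ((t : ℝ) * ν i)))
         ≤ (1 + Real.sqrt d) * covRad d (latticeNu d ν)) ∧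
    (covRad d (latticeNu d ν) < 1 / 2 →
      ∃ t : ℕ, 1 ≤ t ∧ t ≤ q - 1 ∧
        NFn d (by omega) (WithLp.toLp 2 (fun i => Int.fract ((t : ℝ) * ν i)))
          ≤ (1 + Real.sqrt d) * covRad d (latticeNu d ν) ∧
        0 < Int.fract ((t : ℝ) * ((p ⟨d - 1, by omega⟩ : ℝ) / (q : ℝ)))) := by
  classical
  have hd0 : 0 < d := by omega
  have hq2 : 2 ≤ q := by have h1 := hp ⟨0, by omega⟩; have h2 := hq ⟨0, by omega⟩; omega
  have hqR : (0:ℝ) < q := by exact_mod_cast (by omega : 0 < q)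
  have hdR1 : (1:ℝ) ≤ Real.sqrt d := by
    rw [show (1:ℝ) = Real.sqrt 1 by simp]
    exact Real.sqrt_le_sqrt (by exact_mod_cast (by omega : 1 ≤ d))
  set lst : Fin d := ⟨d - 1, by omega⟩ with hlst
  set L := latticeNu d ν with hL
  set τ := covRad d L with hτ
  set S : Set ℝ := {σ : ℝ | 0 < σ ∧ ∀ x : EuclideanSpace ℝ (Fin d), ∃ y ∈ L, dist x y ≤ σ}
    with hS
  have hτS : τ = sInf S := rfl
  have hSne : S.Nonempty := by
    refine ⟨Real.sqrt d, ⟨Real.sqrt_pos.mpr (by exact_mod_cast hd0), ?_⟩⟩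
    intro x
    refine ⟨WithLp.toLp 2 (fun i => (round (x i) : ℝ)), ⟨fun i => round (x i), 0, fun i => by simp⟩, ?_⟩
    rw [aux_dist]
    have hle : (∑ i, (x i - (round (x i):ℝ))^2) ≤ (d:ℝ) := by
      calc ∑ i, (x i - (round (x i):ℝ))^2 ≤ ∑ _i : Fin d, (1:ℝ) := by
            apply Finset.sum_le_sum
            intro i _
            have h := abs_sub_round (x i)
            calc (x i - (round (x i):ℝ))^2 = |x i - (round (x i):ℝ)|^2 := (sq_abs _).symm
              _ ≤ (1/2:ℝ)^2 := pow_le_pow_left₀ (abs_nonneg _) h 2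
              _ ≤ 1 := by norm_num
        _ = (d:ℝ) := by simp
    exact Real.sqrt_le_sqrt hle
  have key : ∀ σ : ℝ, τ < σ →
      ((σ < 1/2 → ∃ t : ℕ, 1 ≤ t ∧ t ≤ q - 1 ∧
          NFn d hd0 (WithLp.toLp 2 fun i => Int.fract ((t : ℝ) * ν i)) < (1 + Real.sqrt d) * σ ∧
          0 < Int.fract ((t : ℝ) * ((p lst : ℝ) / (q : ℝ)))) ∧
       (1/2 ≤ σ → ∃ t : ℕ, 1 ≤ t ∧ t ≤ q - 1 ∧
          NFn d hd0 (WithLp.toLp 2 fun i => Int.fract ((t : ℝ) * ν i)) ≤ (1 + Real.sqrt d) * σ)) := by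
    intro σ hσlt
    obtain ⟨s, hsS, hsσ⟩ := exists_lt_of_csInf_lt hSne (hτS ▸ hσlt)
    obtain ⟨hs0, hscov⟩ := hsS
    constructor
    · -- additive case, σ < 1/2
      intro hhalf
      set xstar : EuclideanSpace ℝ (Fin d) := (WithLp.toLp 2 (fun (i : Fin d) => if (i:ℕ) < d - 1 then s else 1 - σ))
        with hxstar
      have hxi : ∀ i, xstar i = if (i:ℕ) < d - 1 then s else 1 - σ := fun i => rfl
      obtain ⟨y, hyL, hyd⟩ := hscov xstar
      have hcoord : ∀ i, |xstar i - y i| ≤ s := fun i => le_trans (aux_coord xstar y i) hyd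
      have hyy : ∀ i : Fin d, 0 ≤ y i ∧ y i < 1 := by
        intro i
        have h := hcoord i
        rw [hxi i] at h
        rcases lt_or_ge (i:ℕ) (d-1) with hi | hi
        · rw [if_pos hi] at h
          have h2 := abs_le.mp h
          constructor <;> linarith [h2.1, h2.2]
        · rw [if_neg (not_lt.mpr hi)] at h
          have h2 := abs_le.mp h
          constructor <;> linarith [h2.1, h2.2]
      have hylast : 1 - σ - s ≤ y lst := by
        have h := hcoord lst
        rw [hxi lst, if_neg (by simp only [hlst, Fin.val_mk]; omega)] at h
        have h2 := abs_le.mp h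
        linarith [h2.1, h2.2]
      obtain ⟨z, t, hz⟩ := hyL
      have hfr : ∀ i, Int.fract (y i) = y i := fun i => Int.fract_eq_self.mpr (hyy i)
      have hfr2 : ∀ i, Int.fract ((t:ℝ) * ν i) = y i := by
        intro i
        conv_rhs => rw [← hfr i, hz i]
        rw [Int.fract_intCast_add]
      set t' : ℕ := (t % (q:ℤ)).toNat with ht'
      have hfr3 : ∀ i, Int.fract ((t' : ℝ) * ν i) = y i := by
        intro i
        have h8 : Int.fract ((t':ℝ) * ν i) = Int.fract ((t:ℝ) * ν i) := by
          rw [hν i]; exact aux_fract_shift q (by omega) (p i) t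
        rw [h8]; exact hfr2 i
      have hpos : 0 < y lst := by linarith [hylast]
      have ht1 : 1 ≤ t' := by
        rcases Nat.eq_zero_or_pos t' with h0 | h1
        · exfalso
          have h9 := hfr3 lst
          rw [h0] at h9
          simp only [Nat.cast_zero, zero_mul, Int.fract_zero] at h9
          linarith [hpos]
        · exact h1
      have ht2 : t' ≤ q - 1 := by
        have hlt : t % (q:ℤ) < q := Int.emod_lt_of_pos t (by exact_mod_cast (by omega : 0 < q))
        have : t' < q := by rw [ht']; omega
        omega
      refine ⟨t', ht1, ht2, ?_, ?_⟩
      · -- norm bound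
        set estar : EuclideanSpace ℝ (Fin d) := (WithLp.toLp 2 (fun (i : Fin d) => if (i:ℕ) < d - 1 then (0:ℝ) else 1))
          with hestar
        have hei : ∀ i, estar i = if (i:ℕ) < d - 1 then (0:ℝ) else 1 := fun i => rfl
        have hb : NFn d hd0 (WithLp.toLp 2 fun i => Int.fract ((t':ℝ) * ν i))
            ≤ Real.sqrt (∑ i, (y i - estar i)^2) := by
          apply aux_NFn_le hd
          · intro i hi
            show (Int.fract ((t':ℝ) * ν i))^2 ≤ (y i - estar i)^2
            rw [hfr3 i, hei i, if_pos hi]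
            simp
          · have hj : ∀ j : Fin d, (j:ℕ) = d - 1 →
                (1 - Int.fract ((t':ℝ) * ν j))^2 ≤ (y j - estar j)^2 := by
              intro j hjj
              rw [hfr3 j, hei j, if_neg (by omega)]
              apply le_of_eq; ring
            exact hj _ rfl
        have hbd : Real.sqrt (∑ i, (y i - estar i)^2) ≤ s + Real.sqrt d * σ := by
          have h10 : Real.sqrt (∑ i, (y i - estar i)^2) = dist y estar := (aux_dist y estar).symm
          rw [h10]
          have htri : dist y estar ≤ dist y xstar + dist xstar estar := dist_triangle y xstar estar
          have h11 : dist y xstar ≤ s := by rw [dist_comm]; exact hyd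
          have h12 : dist xstar estar ≤ Real.sqrt d * σ := by
            rw [aux_dist]
            have hsum : ∑ i, (xstar i - estar i)^2 = ((d:ℝ) - 1) * s^2 + σ^2 := by
              rw [aux_sum_split hd (fun i => (xstar i - estar i)^2)]
              have h13 : ∑ i ∈ Finset.univ.filter (fun i : Fin d => (i:ℕ) < d - 1),
                  (xstar i - estar i)^2
                  = ∑ _i ∈ Finset.univ.filter (fun i : Fin d => (i:ℕ) < d - 1), s^2 := by
                refine Finset.sum_congr rfl fun i hi => ?_
                have hi2 := (Finset.mem_filter.mp hi).2
                rw [hxi i, hei i, if_pos hi2, if_pos hi2]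
                ring
              rw [h13, Finset.sum_const, aux_card hd,
                hxi ⟨d-1, by omega⟩, hei ⟨d-1, by omega⟩,
                if_neg (by simp only [Fin.val_mk]; omega),
                if_neg (by simp only [Fin.val_mk]; omega)]
              have h14 : ((d-1 : ℕ) : ℝ) = (d:ℝ) - 1 := by
                push_cast [Nat.cast_sub (by omega : 1 ≤ d)]; ring
              rw [nsmul_eq_mul, h14]
              ring
            rw [hsum]
            have h15 : ((d:ℝ) - 1) * s^2 + σ^2 ≤ (d:ℝ) * σ^2 := by
              have hd1 : (1:ℝ) ≤ (d:ℝ) := by exact_mod_cast (by omega : 1 ≤ d)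
              have hss : s^2 ≤ σ^2 := by nlinarith
              nlinarith [mul_nonneg (by linarith : (0:ℝ) ≤ (d:ℝ) - 1)
                (by linarith : (0:ℝ) ≤ σ^2 - s^2)]
            calc Real.sqrt (((d:ℝ) - 1) * s^2 + σ^2) ≤ Real.sqrt ((d:ℝ) * σ^2) :=
                  Real.sqrt_le_sqrt h15
              _ = Real.sqrt d * σ := by
                  rw [Real.sqrt_mul (by positivity), Real.sqrt_sq (by linarith)]
          linarith
        calc NFn d hd0 (WithLp.toLp 2 fun i => Int.fract ((t':ℝ) * ν i)) ≤ s + Real.sqrt d * σ :=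
              le_trans hb hbd
          _ < (1 + Real.sqrt d) * σ := by linarith
      · -- positivity
        have h16 := hfr3 lst
        rw [hν lst] at h16
        exact lt_of_lt_of_eq hpos h16.symm
    · -- wrap-tolerant case, 1/2 ≤ σ
      intro hhalf
      set c : EuclideanSpace ℝ (Fin d) := (WithLp.toLp 2 (fun (_ : Fin d) => (1/2:ℝ))) with hc
      have hci : ∀ i, c i = (1/2:ℝ) := fun i => rfl
      obtain ⟨y, hyL, hyd⟩ := hscov c
      obtain ⟨z, t, hz⟩ := hyL
      have hfr2 : ∀ i, Int.fract ((t:ℝ) * ν i) = Int.fract (y i) := by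
        intro i
        conv_rhs => rw [hz i]
        rw [Int.fract_intCast_add]
      by_cases hall : ∀ i, Int.fract (y i) = 0
      · -- y has integer coordinates: s is large, use t = 1
        have hbig : Real.sqrt (d:ℝ) / 2 ≤ s := by
          have h1 : ∀ i : Fin d, ((1:ℝ)/2)^2 ≤ (c i - y i)^2 := by
            intro i
            have h2 := hall i
            rw [Int.fract] at h2
            have hy : y i = (⌊y i⌋ : ℝ) := by linarith
            have hk : ((1:ℝ)/2) ≤ |1/2 - (⌊y i⌋:ℝ)| := by
              rcases le_or_gt (⌊y i⌋) 0 with hk0 | hk0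
              · have hc0 : ((⌊y i⌋:ℤ):ℝ) ≤ 0 := by exact_mod_cast hk0
                rw [abs_of_nonneg (by linarith)]; linarith
              · have hc0 : (1:ℝ) ≤ ((⌊y i⌋:ℤ):ℝ) := by exact_mod_cast hk0
                rw [abs_of_nonpos (by linarith)]; linarith
            calc ((1:ℝ)/2)^2 ≤ |1/2 - (⌊y i⌋:ℝ)|^2 := by
                  nlinarith [abs_nonneg (1/2 - (⌊y i⌋:ℝ))]
              _ = (c i - y i)^2 := by rw [sq_abs, hci i, ← hy]
          have h2 : (d:ℝ) * ((1:ℝ)/2)^2 ≤ ∑ i, (c i - y i)^2 := by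
            calc (d:ℝ) * ((1:ℝ)/2)^2 = ∑ _i : Fin d, ((1:ℝ)/2)^2 := by
                  rw [Finset.sum_const]; simp [mul_comm]
              _ ≤ _ := Finset.sum_le_sum (fun i _ => h1 i)
          have h3 : Real.sqrt ((d:ℝ) * ((1:ℝ)/2)^2) ≤ dist c y := by
            rw [aux_dist]; exact Real.sqrt_le_sqrt h2
          have h4 : Real.sqrt ((d:ℝ) * ((1:ℝ)/2)^2) = Real.sqrt d / 2 := by
            rw [Real.sqrt_mul (by positivity), Real.sqrt_sq (by norm_num)]; ring
          rw [h4] at h3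
          linarith [hyd]
        refine ⟨1, le_refl 1, by omega, ?_⟩
        have hfr1 : ∀ i, Int.fract (((1:ℕ):ℝ) * ν i) = (p i : ℝ)/q := by
          intro i; rw [Nat.cast_one, one_mul, hν i]
          refine Int.fract_eq_self.mpr ⟨by positivity, ?_⟩
          rw [div_lt_one hqR]; exact_mod_cast hq i
        have hb : NFn d hd0 (WithLp.toLp 2 fun i => Int.fract (((1:ℕ):ℝ) * ν i))
            ≤ Real.sqrt (∑ _i : Fin d, (1:ℝ)^2) := by
          apply aux_NFn_le hd
          · intro i _
            show (Int.fract (((1:ℕ):ℝ) * ν i))^2 ≤ ((1:ℝ))^2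
            rw [hfr1 i]
            have h5 : (p i:ℝ)/q ≤ 1 := by
              rw [div_le_one hqR]; exact_mod_cast (le_of_lt (hq i))
            have h6 : (0:ℝ) ≤ (p i:ℝ)/q := by positivity
            exact pow_le_pow_left₀ h6 h5 2
          · have hj : ∀ j : Fin d,
                (1 - Int.fract (((1:ℕ):ℝ) * ν j))^2 ≤ ((1:ℝ))^2 := by
              intro j
              have h7 := Int.fract_nonneg (((1:ℕ):ℝ) * ν j)
              have h8 := Int.fract_lt_one (((1:ℕ):ℝ) * ν j)
              have h9 : 0 ≤ 1 - Int.fract (((1:ℕ):ℝ) * ν j) := by linarith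
              have h10 : 1 - Int.fract (((1:ℕ):ℝ) * ν j) ≤ 1 := by linarith
              exact pow_le_pow_left₀ h9 h10 2
            exact hj _
        have hs1 : Real.sqrt (∑ _i : Fin d, (1:ℝ)^2) = Real.sqrt d := by simp
        rw [hs1] at hb
        have hσ0 : (0:ℝ) < σ := by linarith
        calc NFn d hd0 (WithLp.toLp 2 fun i => Int.fract (((1:ℕ):ℝ) * ν i)) ≤ Real.sqrt d := hb
          _ ≤ (1 + Real.sqrt d) * σ := by
              nlinarith [hbig, hsσ, mul_nonneg (by linarith [hdR1] : (0:ℝ) ≤ Real.sqrt d - 1)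
                (by linarith : (0:ℝ) ≤ σ)]
      · push_neg at hall
        obtain ⟨i0, hi0⟩ := hall
        set t' : ℕ := (t % (q:ℤ)).toNat with ht'
        have hfr3 : ∀ i, Int.fract ((t' : ℝ) * ν i) = Int.fract (y i) := by
          intro i
          have h8 : Int.fract ((t':ℝ) * ν i) = Int.fract ((t:ℝ) * ν i) := by
            rw [hν i]; exact aux_fract_shift q (by omega) (p i) t
          rw [h8]; exact hfr2 i
        have ht1 : 1 ≤ t' := by
          rcases Nat.eq_zero_or_pos t' with h0 | h1
          · exfalso
            have h9 := hfr3 i0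
            rw [h0] at h9
            simp only [Nat.cast_zero, zero_mul, Int.fract_zero] at h9
            exact hi0 h9.symm
          · exact h1
        have ht2 : t' ≤ q - 1 := by
          have hlt : t % (q:ℤ) < q := Int.emod_lt_of_pos t (by exact_mod_cast (by omega : 0 < q))
          have : t' < q := by rw [ht']; omega
          omega
        refine ⟨t', ht1, ht2, ?_⟩
        have hb : NFn d hd0 (WithLp.toLp 2 fun i => Int.fract ((t':ℝ) * ν i))
            ≤ Real.sqrt (∑ i, ((1/2 + |y i - 1/2|))^2) := by
          apply aux_NFn_le hd
          · intro i _
            show (Int.fract ((t':ℝ) * ν i))^2 ≤ ((1/2 + |y i - 1/2|))^2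
            rw [hfr3 i]
            exact pow_le_pow_left₀ (Int.fract_nonneg (y i)) (aux_fract_le (y i)) 2
          · have hj : ∀ j : Fin d,
                (1 - Int.fract ((t':ℝ) * ν j))^2 ≤ ((1/2 + |y j - 1/2|))^2 := by
              intro j
              rw [hfr3 j]
              have h11 := Int.fract_lt_one (y j)
              exact pow_le_pow_left₀ (by linarith) (aux_one_sub_fract_le (y j)) 2
            exact hj _
        set A : EuclideanSpace ℝ (Fin d) := (WithLp.toLp 2 (fun (_ : Fin d) => (1/2:ℝ))) with hA
        set B : EuclideanSpace ℝ (Fin d) := (WithLp.toLp 2 (fun (i : Fin d) => |y i - 1/2|)) with hB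
        have hAB : Real.sqrt (∑ i, ((1/2 + |y i - 1/2|))^2) = ‖A + B‖ := by
          rw [EuclideanSpace.norm_eq]
          congr 1
          refine Finset.sum_congr rfl fun i _ => ?_
          have hABi : (A + B) i = 1/2 + |y i - 1/2| := rfl
          rw [hABi, Real.norm_eq_abs, sq_abs]
        have hnA : ‖A‖ = Real.sqrt d / 2 := by
          rw [EuclideanSpace.norm_eq]
          have h20 : ∑ i : Fin d, ‖A i‖^2 = (d:ℝ) * ((1:ℝ)/2)^2 := by
            have h21 : ∀ i : Fin d, ‖A i‖^2 = ((1:ℝ)/2)^2 := by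
              intro i
              rw [show A i = (1/2:ℝ) from rfl, Real.norm_eq_abs,
                abs_of_nonneg (by norm_num : (0:ℝ) ≤ 1/2)]
            rw [Finset.sum_congr rfl (fun i _ => h21 i), Finset.sum_const]
            simp [mul_comm]
          rw [h20, Real.sqrt_mul (by positivity), Real.sqrt_sq (by norm_num)]; ring
        have hnB : ‖B‖ = dist c y := by
          rw [EuclideanSpace.norm_eq, aux_dist]
          congr 1
          refine Finset.sum_congr rfl fun i _ => ?_
          rw [show B i = |y i - 1/2| from rfl, Real.norm_eq_abs, abs_abs, sq_abs, hci i]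
          ring
        have htri : ‖A + B‖ ≤ ‖A‖ + ‖B‖ := norm_add_le A B
        have hσ0 : (0:ℝ) < σ := by linarith
        have hfin : Real.sqrt (∑ i, ((1/2 + |y i - 1/2|))^2) ≤ (1 + Real.sqrt d) * σ := by
          rw [hAB]
          have h22 : ‖A‖ + ‖B‖ ≤ Real.sqrt d / 2 + s := by
            rw [hnA, hnB]; linarith [hyd]
          have h23 : Real.sqrt d / 2 ≤ Real.sqrt d * σ := by
            nlinarith [mul_nonneg (Real.sqrt_nonneg (d:ℝ)) (by linarith : (0:ℝ) ≤ σ - 1/2)]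
          linarith [htri]
        exact le_trans hb hfin
  constructor
  · -- main claim
    by_contra hcon
    push_neg at hcon
    set Nf : ℕ → ℝ := fun t => NFn d hd0 (WithLp.toLp 2 fun i => Int.fract ((t:ℝ) * ν i)) with hNf
    set F : Finset ℕ := Finset.Icc 1 (q-1) with hF
    have hFne : F.Nonempty := ⟨1, by rw [hF, Finset.mem_Icc]; omega⟩
    set m := F.inf' hFne Nf with hm
    have hmB : (1 + Real.sqrt d) * τ < m := by
      rw [hm, Finset.lt_inf'_iff]
      intro t htF
      rw [hF, Finset.mem_Icc] at htF
      exact hcon t htF.1 htF.2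
    have hpos2 : (0:ℝ) < 1 + Real.sqrt d := by linarith [Real.sqrt_nonneg (d:ℝ)]
    set σ := τ + (m - (1 + Real.sqrt d)*τ)/(2*(1 + Real.sqrt d)) with hσd
    have hστ : τ < σ := by
      rw [hσd]
      have h30 : (0:ℝ) < (m - (1 + Real.sqrt d)*τ)/(2*(1 + Real.sqrt d)) :=
        div_pos (by linarith) (by linarith)
      linarith
    have hbnd : (1 + Real.sqrt d)*σ < m := by
      rw [hσd, mul_add]
      have h31 : (1 + Real.sqrt d) * ((m - (1 + Real.sqrt d)*τ)/(2*(1 + Real.sqrt d)))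
          = (m - (1 + Real.sqrt d)*τ)/2 := by
        field_simp
      rw [h31]
      linarith
    rcases lt_or_ge σ (1/2) with hcase | hcase
    · obtain ⟨t, h1, h2, h3, _⟩ := (key σ hστ).1 hcase
      have h32 : m ≤ Nf t := Finset.inf'_le _ (by rw [hF, Finset.mem_Icc]; omega)
      have h34 : Nf t < m := lt_trans h3 hbnd
      exact absurd (lt_of_le_of_lt h32 h34) (lt_irrefl _)
    · obtain ⟨t, h1, h2, h3⟩ := (key σ hστ).2 hcase
      have h32 : m ≤ Nf t := Finset.inf'_le _ (by rw [hF, Finset.mem_Icc]; omega)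
      have h34 : Nf t < m := lt_of_le_of_lt h3 hbnd
      exact absurd (lt_of_le_of_lt h32 h34) (lt_irrefl _)
  · -- moreover
    intro hτhalf
    by_contra hcon
    push_neg at hcon
    set Nf : ℕ → ℝ := fun t => NFn d hd0 (WithLp.toLp 2 fun i => Int.fract ((t:ℝ) * ν i)) with hNf
    set F : Finset ℕ := Finset.Icc 1 (q-1) with hF
    set G : Finset ℕ := F.filter (fun t : ℕ => 0 < Int.fract ((t:ℝ) * ((p lst : ℝ)/(q:ℝ))))
      with hG
    have hpos2 : (0:ℝ) < 1 + Real.sqrt d := by linarith [Real.sqrt_nonneg (d:ℝ)]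
    have hGN : ∀ t ∈ G, (1 + Real.sqrt d) * τ < Nf t := by
      intro t htG
      rw [hG, Finset.mem_filter, hF, Finset.mem_Icc] at htG
      by_contra hle
      push_neg at hle
      exact absurd htG.2 (not_lt.mpr (hcon t htG.1.1 htG.1.2 hle))
    rcases G.eq_empty_or_nonempty with hGe | hGne
    · have hστ : τ < (τ + 1/2)/2 := by linarith
      have hσhalf : (τ + 1/2)/2 < 1/2 := by linarith
      obtain ⟨t, h1, h2, _, h4⟩ := (key _ hστ).1 hσhalf
      have htG : t ∈ G := by
        rw [hG, Finset.mem_filter, hF, Finset.mem_Icc]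
        exact ⟨⟨h1, h2⟩, h4⟩
      rw [hGe] at htG
      exact absurd htG (Finset.notMem_empty t)
    · set m := G.inf' hGne Nf with hm
      have hmB : (1 + Real.sqrt d) * τ < m := by
        rw [hm, Finset.lt_inf'_iff]
        exact hGN
      set σ := min ((τ + 1/2)/2) (τ + (m - (1 + Real.sqrt d)*τ)/(2*(1 + Real.sqrt d))) with hσd
      have hστ : τ < σ := by
        apply lt_min (by linarith)
        have h30 : (0:ℝ) < (m - (1 + Real.sqrt d)*τ)/(2*(1 + Real.sqrt d)) :=
          div_pos (by linarith) (by linarith)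
        linarith
      have hσhalf : σ < 1/2 := lt_of_le_of_lt (min_le_left _ _) (by linarith)
      obtain ⟨t, h1, h2, h3, h4⟩ := (key σ hστ).1 hσhalf
      have htG : t ∈ G := by
        rw [hG, Finset.mem_filter, hF, Finset.mem_Icc]
        exact ⟨⟨h1, h2⟩, h4⟩
      have h32 : m ≤ Nf t := Finset.inf'_le _ htG
      have hbnd : (1 + Real.sqrt d)*σ < m := by
        have h35 : σ ≤ τ + (m - (1 + Real.sqrt d)*τ)/(2*(1 + Real.sqrt d)) := min_le_right _ _
        have h31 : (1 + Real.sqrt d) * (τ + (m - (1 + Real.sqrt d)*τ)/(2*(1 + Real.sqrt d)))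
            = (1 + Real.sqrt d)*τ + (m - (1 + Real.sqrt d)*τ)/2 := by
          field_simp
        have h36 : (1 + Real.sqrt d)*σ
            ≤ (1 + Real.sqrt d) * (τ + (m - (1 + Real.sqrt d)*τ)/(2*(1 + Real.sqrt d))) :=
          mul_le_mul_of_nonneg_left h35 (le_of_lt hpos2)
        rw [h31] at h36
        linarith
      exact absurd (lt_of_le_of_lt h32 (lt_trans h3 hbnd)) (lt_irrefl _)
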